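/- Let U ⊆ ℝ^N, f : U → ℝ, D : U → ℝ^N, A an M×N real matrix, γ ∈ ℝ^M, and λ ∈ ℝ^M with λ ≥ 0 componentwise. Define ℒ(p) = f(p) − ⟨λ, A D(p) − γ⟩ and let Q* = sup_{p ∈ U} ℒ(p). Suppose p° ∈ U satisfies A D(p°) ≤ γ componentwise, and suppose p, p̃ ∈ U and α, α̃, β ≥ 0 satisfy Q* − ℒ(p) ≤ α, Q* − ℒ(p̃) ≤ α̃, and ⟨λ, A·(D(p) + D(p̃))/2 − γ⟩ ≥ −β. Then ( f(p) + f(p̃) )/2 ≥ f(p°) − (α + α̃)/2 − β. -/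

import Mathlib

open scoped RealInnerProductSpace

/-- revenue lower bound via weak duality, Eqs.
(proof-primal-opt-8)–(proof-primal-opt-11) in the proof of Lemma 7 of the
paper: with `ℒ(p) = f(p) − ⟨λ, A D(p) − γ⟩` and `Q* = sup_{p ∈ U} ℒ(p)`, if
`p° ∈ U` satisfies `A D(p°) ≤ γ` componentwise, `λ ≥ 0`, and
`Q* − ℒ(p) ≤ α`, `Q* − ℒ(p̃) ≤ α̃`, `⟨λ, A (D(p)+D(p̃))/2 − γ⟩ ≥ −β`, then
`(f(p) + f(p̃))/2 ≥ f(p°) − (α + α̃)/2 − β`. -/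
theorem stmt_14 {N M : ℕ}
    (U : Set (EuclideanSpace ℝ (Fin N)))
    (f : EuclideanSpace ℝ (Fin N) → ℝ)
    (D : EuclideanSpace ℝ (Fin N) → EuclideanSpace ℝ (Fin N))
    (A : EuclideanSpace ℝ (Fin N) →L[ℝ] EuclideanSpace ℝ (Fin M))
    (γ : EuclideanSpace ℝ (Fin M))
    (lam : EuclideanSpace ℝ (Fin M)) (hlam : ∀ j, 0 ≤ lam j)
    (Qstar : ℝ)
    (hQstar : IsLUB ((fun p => f p - ⟪lam, A (D p) - γ⟫) '' U) Qstar)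
    (p₀ : EuclideanSpace ℝ (Fin N)) (hp₀ : p₀ ∈ U)
    (hfeas : ∀ j, A (D p₀) j ≤ γ j)
    (p ptilde : EuclideanSpace ℝ (Fin N)) (hp : p ∈ U) (hpt : ptilde ∈ U)
    (α αtilde β : ℝ) (hα : 0 ≤ α) (hαt : 0 ≤ αtilde) (hβ : 0 ≤ β)
    (hgap : Qstar - (f p - ⟪lam, A (D p) - γ⟫) ≤ α)
    (hgapt : Qstar - (f ptilde - ⟪lam, A (D ptilde) - γ⟫) ≤ αtilde)
    (hbal : ⟪lam, A ((2 : ℝ)⁻¹ • (D p + D ptilde)) - γ⟫ ≥ -β) :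
    (f p + f ptilde) / 2 ≥ f p₀ - (α + αtilde) / 2 - β := by

  -- weak duality: Qstar ≥ ℒ(p₀) ≥ f p₀
  have hQ0 : f p₀ - ⟪lam, A (D p₀) - γ⟫ ≤ Qstar :=
    hQstar.1 ⟨p₀, hp₀, rfl⟩
  have hinner0 : ⟪lam, A (D p₀) - γ⟫ ≤ 0 := by
    rw [real_inner_comm]
    simpa [PiLp.inner_apply] using Finset.sum_nonpos fun j _ =>
      mul_nonpos_of_nonneg_of_nonpos (hlam j) (sub_nonpos.2 (hfeas j) : A (D p₀) j - γ j ≤ 0)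
  have hQ : f p₀ ≤ Qstar := by linarith
  -- linearity of inner/A
  have hlin : ⟪lam, A ((2 : ℝ)⁻¹ • (D p + D ptilde)) - γ⟫
      = (2 : ℝ)⁻¹ * (⟪lam, A (D p) - γ⟫ + ⟪lam, A (D ptilde) - γ⟫) := by
    rw [map_smul, map_add]
    simp only [inner_sub_right, inner_add_right, inner_smul_right]
    ring
  linarith [hgap, hgapt, hbal]
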